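/- For any two probability vectors t and w and 0 ≤ ε < 1: Δ_ε(t ⊗ w) ≥ Δ_{√ε}(t) + log(1-√ε), where t ⊗ w is the product distribution (t_i w_k) and Δ_δ(p) = log min{|J|·max_{j∈J} p_j : Σ_{j∈J} p_j ≥ 1-δ}. -/

import Mathlib

/-- `Δ_ε(r) = log₂ min { |J| · max_{j∈J} r_j : Σ_{j∈J} r_j ≥ 1-ε }`. -/
noncomputable def Delta {ι : Type*} [Fintype ι] (r : ι → ℝ) (ε : ℝ) : ℝ :=
  sInf { x | ∃ J : Finset ι, 1 - ε ≤ ∑ j ∈ J, r j ∧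
    x = Real.logb 2 ((J.card : ℝ) * (⨆ j ∈ (J : Set ι), r j)) }

private lemma le_biSup_fin {ι : Type*} [Fintype ι] (f : ι → ℝ) {s : Finset ι} {j : ι}
    (hj : j ∈ s) : f j ≤ ⨆ i ∈ (s : Set ι), f i := by
  have h1 : (⨆ _ : j ∈ (s : Set ι), f j) = f j := ciSup_pos (by exact_mod_cast hj)
  calc f j = ⨆ _ : j ∈ (s : Set ι), f j := h1.symm
    _ ≤ ⨆ i, ⨆ _ : i ∈ (s : Set ι), f i :=
        le_ciSup (f := fun i => ⨆ _ : i ∈ (s : Set ι), f i)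
          (Set.Finite.bddAbove (Set.finite_range _)) j

private lemma biSup_le_fin {ι : Type*} [Fintype ι] (f : ι → ℝ) (s : Finset ι) {a : ℝ}
    (ha : 0 ≤ a) (h : ∀ i ∈ s, f i ≤ a) : (⨆ i ∈ (s : Set ι), f i) ≤ a :=
  Real.iSup_le (fun i => Real.iSup_le (fun hi => h i (by exact_mod_cast hi)) ha) ha

private lemma sum_le_card_mul_biSup {ι : Type*} [Fintype ι] (f : ι → ℝ) (s : Finset ι) :
    ∑ i ∈ s, f i ≤ (s.card : ℝ) * (⨆ i ∈ (s : Set ι), f i) := by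
  have := Finset.sum_le_card_nsmul s f (⨆ i ∈ (s : Set ι), f i)
    (fun i hi => le_biSup_fin f hi)
  simpa [nsmul_eq_mul] using this

/-- Lemma 2: For any two probability vectors t, w and 0 ≤ ε < 1:
`Δ_ε(t ⊗ w) ≥ Δ_{√ε}(t) + log₂(1 - √ε)`, where `t ⊗ w` is the product distribution
with entries `t_i w_k`. -/
theorem delta_eps_product_bound {ι κ : Type*} [Fintype ι] [Fintype κ]
    (t : ι → ℝ) (w : κ → ℝ)
    (ht : ∀ i, 0 ≤ t i) (hw : ∀ k, 0 ≤ w k)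
    (htsum : ∑ i, t i = 1) (hwsum : ∑ k, w k = 1)
    (ε : ℝ) (hε0 : 0 ≤ ε) (hε1 : ε < 1) :
    Delta (fun p : ι × κ => t p.1 * w p.2) ε ≥
      Delta t (Real.sqrt ε) + Real.logb 2 (1 - Real.sqrt ε) := by
  classical
  set δ := Real.sqrt ε with hδdef
  have hδ0 : 0 ≤ δ := Real.sqrt_nonneg ε
  have hδε : δ * δ = ε := Real.mul_self_sqrt hε0
  have hδ1 : δ < 1 := by nlinarith
  have h1δ : (0:ℝ) < 1 - δ := by linarith
  -- nonemptiness of the defining set for the product distribution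
  have hne : { x | ∃ J : Finset (ι × κ), 1 - ε ≤ ∑ j ∈ J, t j.1 * w j.2 ∧
      x = Real.logb 2 ((J.card : ℝ) * (⨆ j ∈ (J : Set (ι × κ)), t j.1 * w j.2)) }.Nonempty := by
    refine ⟨_, Finset.univ, ?_, rfl⟩
    have h : ∑ j : ι × κ, t j.1 * w j.2 = (∑ i, t i) * (∑ k, w k) := by
      rw [Finset.sum_mul_sum, Fintype.sum_prod_type]
    rw [h, htsum, hwsum]; linarith
  -- bddBelow for the set defining `Delta t δ`
  have hbb : BddBelow { x | ∃ J : Finset ι, 1 - δ ≤ ∑ j ∈ J, t j ∧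
      x = Real.logb 2 ((J.card : ℝ) * (⨆ j ∈ (J : Set ι), t j)) } := by
    refine ⟨Real.logb 2 (1 - δ), ?_⟩
    rintro x ⟨I, hI, rfl⟩
    have hsum : (1 - δ : ℝ) ≤ (I.card : ℝ) * (⨆ i ∈ (I : Set ι), t i) :=
      le_trans hI (sum_le_card_mul_biSup t I)
    exact (Real.logb_le_logb (by norm_num) h1δ (lt_of_lt_of_le h1δ hsum)).2 hsum
  rw [ge_iff_le]
  refine le_csInf hne ?_
  rintro x ⟨J, hJ, rfl⟩
  set M := ⨆ j ∈ (J : Set (ι × κ)), t j.1 * w j.2 with hMdef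
  have hJne : J.Nonempty := by
    rcases Finset.eq_empty_or_nonempty J with h | h
    · exfalso; rw [h] at hJ; simp at hJ; linarith
    · exact h
  have hMub : ∀ p ∈ J, t p.1 * w p.2 ≤ M := fun p hp =>
    le_biSup_fin (fun j : ι × κ => t j.1 * w j.2) hp
  have hM0 : 0 ≤ M := by
    obtain ⟨p, hp⟩ := hJne
    exact le_trans (mul_nonneg (ht p.1) (hw p.2)) (hMub p hp)
  have hcard : (0:ℝ) < J.card := by
    exact_mod_cast Finset.card_pos.2 hJne
  have hJM : 1 - ε ≤ (J.card : ℝ) * M :=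
    le_trans hJ (sum_le_card_mul_biSup (fun j : ι × κ => t j.1 * w j.2) J)
  -- fibers over columns
  set D : κ → Finset ι := fun k => (J.filter (fun p => p.2 = k)).image Prod.fst with hDdef
  set f : κ → ℝ := fun k => ∑ i ∈ D k, t i with hfdef
  have hmemD : ∀ k, ∀ i ∈ D k, (i, k) ∈ J := by
    intro k i hi
    simp only [hDdef, Finset.mem_image, Finset.mem_filter] at hi
    obtain ⟨p, ⟨hpJ, hp2⟩, hp1⟩ := hi
    have hpe : p = (i, k) := Prod.ext hp1 hp2
    rwa [hpe] at hpJ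
  have hsumf : ∀ k, f k * w k = ∑ p ∈ J.filter (fun p => p.2 = k), t p.1 * w p.2 := by
    intro k
    have hinj : ∀ p ∈ J.filter (fun p => p.2 = k), ∀ q ∈ J.filter (fun p => p.2 = k),
        p.1 = q.1 → p = q := by
      intro p hp q hq h1
      have hp2 := (Finset.mem_filter.1 hp).2
      have hq2 := (Finset.mem_filter.1 hq).2
      exact Prod.ext h1 (hp2.trans hq2.symm)
    rw [hfdef]
    simp only [hDdef]
    rw [Finset.sum_mul, Finset.sum_image hinj]
    refine Finset.sum_congr rfl (fun p hp => ?_)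
    simp only [Finset.mem_filter] at hp
    rw [hp.2]
  have htotal : ∑ k, f k * w k = ∑ p ∈ J, t p.1 * w p.2 := by
    rw [Finset.sum_congr rfl (fun k _ => hsumf k)]
    exact Finset.sum_fiberwise_of_maps_to (fun p _ => Finset.mem_univ p.2) _
  have hf1 : ∀ k, f k ≤ 1 := by
    intro k
    rw [hfdef, ← htsum]
    exact Finset.sum_le_sum_of_subset_of_nonneg (Finset.subset_univ _) (fun i _ _ => ht i)
  have hf0 : ∀ k, 0 ≤ f k := fun k => Finset.sum_nonneg (fun i _ => ht i)
  -- total "missing mass" budget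
  have hbudget : ∑ k, w k * (1 - f k) ≤ ε := by
    have h1 : ∑ k, w k * (1 - f k) = (∑ k, w k) - ∑ k, f k * w k := by
      rw [← Finset.sum_sub_distrib]
      exact Finset.sum_congr rfl (fun k _ => by ring)
    rw [h1, hwsum, htotal]; linarith
  -- Markov: bad columns have small weight
  set B : Finset κ := Finset.univ.filter (fun k => f k < 1 - δ) with hBdef
  have hbadwt : ∑ k ∈ B, w k ≤ δ := by
    have hge : δ * ∑ k ∈ B, w k ≤ ∑ k ∈ B, w k * (1 - f k) := by
      rw [Finset.mul_sum]
      refine Finset.sum_le_sum (fun k hk => ?_)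
      simp only [hBdef, Finset.mem_filter] at hk
      have hd : δ ≤ 1 - f k := by linarith [hk.2]
      calc δ * w k = w k * δ := mul_comm _ _
        _ ≤ w k * (1 - f k) := mul_le_mul_of_nonneg_left hd (hw k)
    have hle : ∑ k ∈ B, w k * (1 - f k) ≤ ∑ k, w k * (1 - f k) :=
      Finset.sum_le_sum_of_subset_of_nonneg (Finset.subset_univ _)
        (fun k _ _ => mul_nonneg (hw k) (by linarith [hf1 k]))
    rcases eq_or_lt_of_le hδ0 with h0 | h0
    · have hε : ε = 0 := by nlinarith
      have hall : ∑ k, w k * (1 - f k) = 0 :=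
        le_antisymm (by rw [hε] at hbudget; exact hbudget)
          (Finset.sum_nonneg (fun k _ => mul_nonneg (hw k) (by linarith [hf1 k])))
      have hzero : ∀ k ∈ (Finset.univ : Finset κ), w k * (1 - f k) = 0 :=
        (Finset.sum_eq_zero_iff_of_nonneg
          (fun k _ => mul_nonneg (hw k) (by linarith [hf1 k]))).1 hall
      have hBz : ∑ k ∈ B, w k = 0 := by
        refine Finset.sum_eq_zero (fun k hk => ?_)
        simp only [hBdef, Finset.mem_filter] at hk
        have h2 := hzero k (Finset.mem_univ k)
        have h3 : 1 - f k ≠ 0 := by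
          have : f k < 1 - δ := hk.2
          rw [← h0] at this
          intro hc; rw [sub_eq_zero] at hc; rw [← hc] at this; linarith
        exact (mul_eq_zero.1 h2).resolve_right h3
      rw [hBz]; exact hδ0
    · have h4 := le_trans hge (le_trans hle hbudget)
      rw [← hδε] at h4
      exact le_of_mul_le_mul_left h4 h0
  -- good columns carry most of the weight
  set G : Finset κ := Finset.univ.filter (fun k => 1 - δ ≤ f k) with hGdef
  have hgood : 1 - δ ≤ ∑ k ∈ G, w k := by
    have hsplit := Finset.sum_filter_add_sum_filter_not Finset.univ (fun k => 1 - δ ≤ f k) w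
    have hBeq : Finset.univ.filter (fun k => ¬ 1 - δ ≤ f k) = B := by
      simp only [hBdef, not_le]
    rw [hBeq, hwsum] at hsplit
    have : ∑ k ∈ G, w k = 1 - ∑ k ∈ B, w k := by rw [hGdef]; linarith [hsplit]
    rw [this]; linarith [hbadwt]
  -- total fiber size bound
  have hDsum : ∑ k, ((D k).card : ℝ) ≤ (J.card : ℝ) := by
    have h2 : J.card = ∑ k, (J.filter (fun p => p.2 = k)).card :=
      Finset.card_eq_sum_card_fiberwise (fun p _ => Finset.mem_univ p.2)
    have h3 : ∑ k, ((D k).card : ℝ) ≤ ∑ k, ((J.filter (fun p => p.2 = k)).card : ℝ) := by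
      refine Finset.sum_le_sum (fun k _ => ?_)
      exact_mod_cast Finset.card_image_le
    have h4 : (∑ k, ((J.filter (fun p => p.2 = k)).card : ℝ)) = (J.card : ℝ) := by
      rw [h2]; push_cast; ring
    linarith [h3, h4.le, h4.ge]
  -- pigeonhole: a good, positive-weight, small fiber
  have hkey : ∃ k, (1 - δ ≤ f k) ∧ 0 < w k ∧ ((D k).card : ℝ) * (1 - δ) ≤ w k * J.card := by
    by_contra hcon
    push_neg at hcon
    have hexpos : ∃ k ∈ G, 0 < w k := by
      by_contra hno
      push_neg at hno
      have : ∑ k ∈ G, w k ≤ 0 := Finset.sum_nonpos (fun k hk => hno k hk)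
      linarith
    obtain ⟨k₀, hk₀G, hk₀w⟩ := hexpos
    have hub : ∀ k ∈ G, w k * J.card ≤ ((D k).card : ℝ) * (1 - δ) := by
      intro k hk
      simp only [hGdef, Finset.mem_filter] at hk
      rcases eq_or_lt_of_le (hw k) with h0 | h0
      · rw [← h0]
        have hnn : (0:ℝ) ≤ ((D k).card : ℝ) * (1 - δ) := mul_nonneg (Nat.cast_nonneg _) h1δ.le
        linarith
      · exact le_of_lt (hcon k hk.2 h0)
    have hstrict : ∑ k ∈ G, w k * (J.card:ℝ) < ∑ k ∈ G, ((D k).card : ℝ) * (1 - δ) := by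
      refine Finset.sum_lt_sum hub ⟨k₀, hk₀G, ?_⟩
      simp only [hGdef, Finset.mem_filter] at hk₀G
      exact hcon k₀ hk₀G.2 hk₀w
    have h2 : ∑ k ∈ G, ((D k).card : ℝ) * (1 - δ) ≤ (J.card : ℝ) * (1 - δ) := by
      have h5 : ∑ k ∈ G, ((D k).card : ℝ) * (1 - δ) ≤ ∑ k, ((D k).card : ℝ) * (1 - δ) :=
        Finset.sum_le_sum_of_subset_of_nonneg (Finset.subset_univ _) (fun k _ _ => by positivity)
      have h6 : ∑ k, ((D k).card : ℝ) * (1 - δ) = (∑ k, ((D k).card : ℝ)) * (1 - δ) := by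
        rw [Finset.sum_mul]
      nlinarith [hDsum]
    have h3 : (∑ k ∈ G, w k) * (J.card : ℝ) < (J.card : ℝ) * (1 - δ) := by
      rw [Finset.sum_mul]; exact lt_of_lt_of_le hstrict h2
    nlinarith [hgood, hcard]
  obtain ⟨k, hfk, hwk, hkcard⟩ := hkey
  -- D k is a witness set for t
  set N := ⨆ i ∈ ((D k : Finset ι) : Set ι), t i with hNdef
  have hSsum : 1 - δ ≤ ∑ i ∈ D k, t i := hfk
  have hNub : N ≤ M / w k := by
    refine biSup_le_fin t (D k) (by positivity) (fun i hi => ?_)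
    have := hMub (i, k) (hmemD k i hi)
    rw [le_div_iff₀ hwk]
    exact this
  have hSpos : (0:ℝ) < ((D k).card : ℝ) * N :=
    lt_of_lt_of_le h1δ (le_trans hSsum (sum_le_card_mul_biSup t (D k)))
  have hN0 : 0 ≤ N := by
    by_contra hneg
    push_neg at hneg
    have : ((D k).card : ℝ) * N ≤ 0 :=
      mul_nonpos_of_nonneg_of_nonpos (Nat.cast_nonneg _) (le_of_lt hneg)
    linarith
  have hchain : ((D k).card : ℝ) * N ≤ (J.card : ℝ) * M / (1 - δ) := by
    rw [le_div_iff₀ h1δ]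
    calc ((D k).card : ℝ) * N * (1 - δ) = (((D k).card : ℝ) * (1 - δ)) * N := by ring
      _ ≤ (w k * (J.card : ℝ)) * (M / w k) := by
          refine mul_le_mul hkcard hNub hN0 ?_
          positivity
      _ = (J.card : ℝ) * M := by field_simp
  have hΔ : Delta t δ ≤ Real.logb 2 (((D k).card : ℝ) * N) := csInf_le hbb ⟨D k, hSsum, rfl⟩
  have hJMpos : (0:ℝ) < (J.card : ℝ) * M := by linarith [hJM]
  have hlog : Real.logb 2 (((D k).card : ℝ) * N) ≤
      Real.logb 2 ((J.card : ℝ) * M) - Real.logb 2 (1 - δ) := by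
    have h1 : Real.logb 2 (((D k).card : ℝ) * N) ≤
        Real.logb 2 ((J.card : ℝ) * M / (1 - δ)) :=
      (Real.logb_le_logb (by norm_num) hSpos (lt_of_lt_of_le hSpos hchain)).2 hchain
    rwa [Real.logb_div (ne_of_gt hJMpos) (ne_of_gt h1δ)] at h1
  linarith [hΔ, hlog]
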